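/- Fix p_I > 0, λ > 0, T > 0, C ∈ ℝ, and n ∈ {1,…,5}, and set k = 6 − n, Δg = g(k;λT) − g(k−1;λT). Then the profit increment Δπ(n;λ,T) = π(n+1) − π(n) satisfies: Δπ(n;λ,T) < 0 if and only if λ·(4T − 2T·Δg) < n·Δg + g(k;λT); equivalently, writing λₙ† = (n·Δg + g(k;λT))/(4T − 2T·Δg) (which is well defined and strictly positive since 0 < Δg < 1), Δπ(n;λ,T) < 0 iff λ < λₙ†. -/

import Mathlib

open Real

/-- Truncated Poisson mean: `g(k;μ) = ∑_{m=0}^∞ min(m,k) · e^{−μ} μ^m / m!`. -/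
noncomputable def truncMean (k : ℕ) (μ : ℝ) : ℝ :=
  ∑' m : ℕ, (min m k : ℝ) * (Real.exp (-μ) * μ ^ m / (m.factorial : ℝ))

/-- Expected profit per unit time: `π(n;λ,T) = A(n)/B(n) − C` with
`A(n) = p_I (n + g(6−n;λT)/2)` and `B(n) = n/λ + 2T`. -/
noncomputable def profit (p_I C lam T : ℝ) (n : ℕ) : ℝ :=
  p_I * ((n : ℝ) + truncMean (6 - n) (lam * T) / 2) / ((n : ℝ) / lam + 2 * T) - C

/-- Profit increment `Δπ(n;λ,T) = π(n+1;λ,T) − π(n;λ,T)`. -/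
noncomputable def dProfit (p_I C lam T : ℝ) (n : ℕ) : ℝ :=
  profit p_I C lam T (n + 1) - profit p_I C lam T n

/-- **Sign condition (Equations 10–11, Proposition 1 / Theorem 1).**
With `k = 6 − n` and `Δg = g(k;λT) − g(k−1;λT)`:
`Δπ(n;λ,T) < 0 ↔ λ (4T − 2T Δg) < n Δg + g(k;λT)`; equivalently, writing
`λₙ† = (n Δg + g(k;λT)) / (4T − 2T Δg)` (well defined and strictly positive),
`Δπ(n;λ,T) < 0 ↔ λ < λₙ†`. -/
lemma summable_poisson (μ : ℝ) :
    Summable (fun m : ℕ => Real.exp (-μ) * μ ^ m / (m.factorial : ℝ)) := by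
  have := (Real.summable_pow_div_factorial μ).mul_left (Real.exp (-μ))
  simpa [mul_div_assoc] using this

lemma tsum_poisson (μ : ℝ) :
    ∑' m : ℕ, Real.exp (-μ) * μ ^ m / (m.factorial : ℝ) = 1 := by
  have h1 : ∑' m : ℕ, Real.exp (-μ) * μ ^ m / (m.factorial : ℝ)
      = Real.exp (-μ) * ∑' m : ℕ, μ ^ m / (m.factorial : ℝ) := by
    rw [← tsum_mul_left]; simp [mul_div_assoc]
  have h2 : ∑' m : ℕ, μ ^ m / (m.factorial : ℝ) = Real.exp μ := by
    rw [Real.exp_eq_exp_ℝ, NormedSpace.exp_eq_tsum_div]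
  rw [h1, h2, ← Real.exp_add]; simp

lemma summable_trunc (k : ℕ) (μ : ℝ) (hμ : 0 ≤ μ) :
    Summable (fun m : ℕ => (min m k : ℝ) * (Real.exp (-μ) * μ ^ m / (m.factorial : ℝ))) := by
  apply Summable.of_nonneg_of_le
    (fun m => by positivity)
    (fun m => ?_)
    ((summable_poisson μ).mul_left (k : ℝ))
  have h1 : ((min m k : ℝ) : ℝ) ≤ (k : ℝ) := by push_cast; exact min_le_right _ _
  have h2 : 0 ≤ Real.exp (-μ) * μ ^ m / (m.factorial : ℝ) := by positivity
  exact mul_le_mul_of_nonneg_right h1 h2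

lemma trunc_diff (k : ℕ) (hk : 1 ≤ k) (μ : ℝ) (hμ : 0 ≤ μ) :
    truncMean k μ - truncMean (k - 1) μ
      = ∑' m : ℕ, (if k ≤ m then (1:ℝ) else 0) * (Real.exp (-μ) * μ ^ m / (m.factorial : ℝ)) := by
  rw [truncMean, truncMean, ← Summable.tsum_sub (summable_trunc k μ hμ) (summable_trunc (k-1) μ hμ)]
  apply tsum_congr
  intro m
  rw [← sub_mul]
  congr 1
  have hc : ((k - 1 : ℕ) : ℝ) = (k : ℝ) - 1 := by
    have : (1:ℕ) ≤ k := hk; push_cast [this]; ring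
  rcases le_or_gt k m with h | h
  · have hm : (k : ℝ) ≤ (m : ℝ) := by exact_mod_cast h
    have hm' : ((k - 1 : ℕ) : ℝ) ≤ (m : ℝ) := by rw [hc]; linarith
    rw [if_pos h, min_eq_right hm, min_eq_right hm', hc]
    ring
  · have hm : (m : ℝ) ≤ (k : ℝ) := by exact_mod_cast h.le
    have hm' : (m : ℝ) ≤ ((k - 1 : ℕ) : ℝ) := by
      have : m ≤ k - 1 := by omega
      exact_mod_cast this
    rw [if_neg (by omega), min_eq_left hm, min_eq_left hm']
    ring

lemma dg_pos (k : ℕ) (hk : 1 ≤ k) (μ : ℝ) (hμ : 0 < μ) :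
    0 < truncMean k μ - truncMean (k - 1) μ := by
  rw [trunc_diff k hk μ hμ.le]
  have hs : Summable (fun m : ℕ => (if k ≤ m then (1:ℝ) else 0) * (Real.exp (-μ) * μ ^ m / (m.factorial : ℝ))) := by
    apply Summable.of_nonneg_of_le (fun m => by positivity) (fun m => ?_) (summable_poisson μ)
    split <;> simp <;> positivity
  refine Summable.tsum_pos hs (fun m => by positivity) k ?_
  rw [if_pos le_rfl, one_mul]
  positivity

lemma dg_lt_one (k : ℕ) (hk : 1 ≤ k) (μ : ℝ) (hμ : 0 < μ) :
    truncMean k μ - truncMean (k - 1) μ < 1 := by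
  rw [trunc_diff k hk μ hμ.le]
  conv_rhs => rw [← tsum_poisson μ]
  refine Summable.tsum_lt_tsum (f := fun m : ℕ => (if k ≤ m then (1:ℝ) else 0) * (Real.exp (-μ) * μ ^ m / (m.factorial : ℝ)))
    (i := 0) (fun m => ?_) ?_ ?_ (summable_poisson μ)
  · simp only []
    split <;> simp <;> positivity
  · rw [if_neg (by omega)]; simp; positivity
  · apply Summable.of_nonneg_of_le (fun m => by positivity) (fun m => ?_) (summable_poisson μ)
    split <;> simp <;> positivity

lemma truncMean_nonneg (k : ℕ) (μ : ℝ) (hμ : 0 ≤ μ) : 0 ≤ truncMean k μ := by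
  refine tsum_nonneg fun m => mul_nonneg (le_min (by positivity) (by positivity)) (by positivity)


theorem increment_sign_condition
    (p_I lam T C : ℝ) (hp : 0 < p_I) (hlam : 0 < lam) (hT : 0 < T)
    (n : ℕ) (hn1 : 1 ≤ n) (hn5 : n ≤ 5) (k : ℕ) (hk : k = 6 - n)
    (Δg : ℝ) (hΔg : Δg = truncMean k (lam * T) - truncMean (k - 1) (lam * T))
    (lamDagger : ℝ)
    (hld : lamDagger = ((n : ℝ) * Δg + truncMean k (lam * T)) / (4 * T - 2 * T * Δg)) :
    (dProfit p_I C lam T n < 0 ↔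
      lam * (4 * T - 2 * T * Δg) < (n : ℝ) * Δg + truncMean k (lam * T)) ∧
    0 < lamDagger ∧
    (dProfit p_I C lam T n < 0 ↔ lam < lamDagger) := by
  have hμ : 0 < lam * T := mul_pos hlam hT
  have hk1 : 1 ≤ k := by omega
  have hdgpos : 0 < Δg := hΔg ▸ dg_pos k hk1 _ hμ
  have hdglt : Δg < 1 := hΔg ▸ dg_lt_one k hk1 _ hμ
  have hg0 : 0 ≤ truncMean k (lam * T) := truncMean_nonneg k _ hμ.le
  have hn1' : (1 : ℝ) ≤ (n : ℝ) := by exact_mod_cast hn1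
  have hB0 : 0 < (n : ℝ) / lam + 2 * T := by positivity
  have hB1 : 0 < ((n : ℝ) + 1) / lam + 2 * T := by positivity
  have hden : 0 < 2 * lam * ((n : ℝ) / lam + 2 * T) * (((n : ℝ) + 1) / lam + 2 * T) := by
    positivity
  have hk6 : 6 - (n + 1) = k - 1 := by omega
  have hg1 : truncMean (k - 1) (lam * T) = truncMean k (lam * T) - Δg := by
    rw [hΔg]; ring
  have hid : dProfit p_I C lam T n
      = p_I * (lam * (4 * T - 2 * T * Δg) - ((n : ℝ) * Δg + truncMean k (lam * T)))
        / (2 * lam * ((n : ℝ) / lam + 2 * T) * (((n : ℝ) + 1) / lam + 2 * T)) := by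
    rw [dProfit, profit, profit, hk6, ← hk, hg1]
    push_cast
    field_simp
    ring
  have hmain : dProfit p_I C lam T n < 0 ↔
      lam * (4 * T - 2 * T * Δg) < (n : ℝ) * Δg + truncMean k (lam * T) := by
    rw [hid, div_lt_iff₀ hden, zero_mul]
    constructor
    · intro h; nlinarith
    · intro h; nlinarith
  have hD : 0 < 4 * T - 2 * T * Δg := by nlinarith
  have hNum : 0 < (n : ℝ) * Δg + truncMean k (lam * T) := by nlinarith
  refine ⟨hmain, ?_, ?_⟩
  · rw [hld]; exact div_pos hNum hD
  · rw [hmain, hld, lt_div_iff₀ hD]
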